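/- Integrating the vortex equation iF_h + (1/2)(|φ|²_h − τ)ω = 0 over Σ gives ∫_Σ |φ|²_h ω = τV − 4πN; consequently, if the vortex equation admits a solution with a not-identically-zero holomorphic section φ, then V > 4πN/τ (strict, since |φ|²_h > 0 on a set of positive measure). -/

import Mathlib

open MeasureTheory

/-- Integrating the vortex equation `iF_h + (1/2)(|φ|²_h − τ)ω = 0` over `Σ` gives
`∫ |φ|²_h ω = τV − 4πN`; consequently, if the vortex equation has a solution with a
not-identically-zero holomorphic section `φ`, then `V > 4πN/τ`.  Here `μ` is the
measure `ω` of total volume `V`, `F = iΛ_ω F_h` with `∫ F = 2πN`, and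
`φsq = |φ|²_h ≥ 0` is positive on a set of positive measure. -/
theorem vortex_integral_identity_and_volume_bound
    {X : Type*} [MeasurableSpace X] (μ : Measure X)
    (F φsq : X → ℝ) (τ V N : ℝ) (hτ : 0 < τ) (hV : 0 < V)
    (hμ : (μ Set.univ).toReal = V)
    (hvortex : ∀ x, F x + (1 / 2) * (φsq x - τ) = 0)
    (hFint : Integrable F μ)
    (hChern : ∫ x, F x ∂μ = 2 * Real.pi * N)
    (hφpos : ∀ x, 0 ≤ φsq x)
    (hsupp : 0 < μ {x | 0 < φsq x}) :
    (∫ x, φsq x ∂μ = τ * V - 4 * Real.pi * N) ∧ 4 * Real.pi * N / τ < V := by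
  have hfin : μ Set.univ ≠ ⊤ := by
    intro h
    rw [h] at hμ
    simp at hμ
    exact hV.ne' hμ.symm
  haveI : IsFiniteMeasure μ := ⟨lt_top_iff_ne_top.2 hfin⟩
  have heq : φsq = fun x => τ - 2 * F x := by
    funext x
    have := hvortex x
    linarith
  have hint : Integrable φsq μ := by
    rw [heq]
    exact (integrable_const τ).sub (hFint.const_mul 2)
  have hval : ∫ x, φsq x ∂μ = τ * V - 4 * Real.pi * N := by
    rw [heq]
    rw [integral_sub (integrable_const τ) (hFint.const_mul 2),
      integral_const, integral_const_mul, hChern, measureReal_def, hμ]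
    simp [smul_eq_mul]
    ring
  refine ⟨hval, ?_⟩
  have hpos : 0 < ∫ x, φsq x ∂μ := by
    rw [integral_pos_iff_support_of_nonneg (fun x => hφpos x) hint]
    refine hsupp.trans_le (measure_mono ?_)
    intro x hx
    exact hx.ne'
  rw [hval] at hpos
  rw [div_lt_iff₀ hτ]
  nlinarith
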